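/- Let R be a unital *-algebra over ℂ and let τ : R → ℂ be a linear functional that is tracial (τ(ab) = τ(ba) for all a, b ∈ R). Let y ∈ R satisfy yy*y = y, and set p = y*y and f = yy*; assume τ(p) ≠ 0. Let N be a (not necessarily unital) subalgebra of R with f ∈ N and x = fxf for all x ∈ N, and let P be a subalgebra of R with p ∈ P and x = pxp for all x ∈ P. Write N⁰ = N ∩ ker τ and P⁰ = P ∩ ker τ, and let y*N⁰y = {y*sy : s ∈ N⁰} and yP⁰y* = {yty* : t ∈ P⁰}. If Λ°(y*N⁰y, P⁰) ⊆ ker τ, then Λ°(N⁰, yP⁰y*) ⊆ ker τ. -/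

import Mathlib

private lemma absorb_prod {R : Type*} [Ring R] (y z : R) :
    ∀ l : List R, (∀ x ∈ l, z * y * x = x) → l ≠ [] → z * y * l.prod = l.prod := by
  intro l
  induction l with
  | nil => intro _ h; exact absurd rfl h
  | cons h t ih =>
      intro hall _
      have hh := hall h (List.mem_cons_self)
      calc z * y * (h :: t).prod = (z * y * h) * t.prod := by
            simp [List.prod_cons, mul_assoc]
        _ = (h :: t).prod := by rw [hh]; simp [List.prod_cons]

private lemma conj_prod {R : Type*} [Ring R] (y z : R) :
    ∀ l : List R, (∀ x ∈ l, z * y * x = x) → l ≠ [] →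
      (l.map (fun x => y * x * z)).prod = y * l.prod * z := by
  intro l
  induction l with
  | nil => intro _ h; exact absurd rfl h
  | cons h t ih =>
      intro hall _
      rcases eq_or_ne t [] with rfl | hne
      · simp
      · have htall : ∀ x ∈ t, z * y * x = x := fun x hx => hall x (List.mem_cons_of_mem _ hx)
        have := ih htall hne
        calc ((h :: t).map (fun x => y * x * z)).prod
            = (y * h * z) * (t.map (fun x => y * x * z)).prod := by simp [List.prod_cons]
          _ = (y * h * z) * (y * t.prod * z) := by rw [this]
          _ = y * (h * (z * y * t.prod)) * z := by simp [mul_assoc]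
          _ = y * (h :: t).prod * z := by rw [absorb_prod y z t htall hne]; simp [List.prod_cons, mul_assoc]



/-- `altSet X Y` is Λ°(X, Y): the set of all products `c₁c₂⋯cₙ`, `n ≥ 1`, where each
factor lies in `X` or in `Y` and consecutive factors come from different sets. -/
def altSet {M : Type*} [Monoid M] (X Y : Set M) : Set M :=
  { m | ∃ (n : ℕ) (_hn : 0 < n) (c : Fin n → M) (lab : Fin n → Bool),
      (∀ j, if lab j then c j ∈ X else c j ∈ Y) ∧
      (∀ (j : ℕ) (h : j + 1 < n),
        lab ⟨j, Nat.lt_of_succ_lt h⟩ ≠ lab ⟨j + 1, h⟩) ∧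
      m = (List.ofFn c).prod }

/-- Transport of the freeness condition by a partial isometry `y` with `p = y*y`,
`f = yy*`: if `N` lives in the corner `fRf`, `P` lives in the corner `pRp`, `τ` is
tracial with `τ(p) ≠ 0`, and `Λ°(y*N⁰y, P⁰) ⊆ ker τ`, then `Λ°(N⁰, yP⁰y*) ⊆ ker τ`. -/
theorem freeness_transport {R : Type*} [Ring R] [Algebra ℂ R] [StarRing R]
    [StarModule ℂ R]
    (τ : R →ₗ[ℂ] ℂ) (htr : ∀ a b : R, τ (a * b) = τ (b * a))
    (y : R) (hy : y * star y * y = y)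
    (hτp : τ (star y * y) ≠ 0)
    (N P : NonUnitalSubalgebra ℂ R)
    (hfN : y * star y ∈ N)
    (hNcorner : ∀ x ∈ N, x = (y * star y) * x * (y * star y))
    (hpP : star y * y ∈ P)
    (hPcorner : ∀ x ∈ P, x = (star y * y) * x * (star y * y))
    (hyp : altSet ((fun s => star y * s * y) '' { x : R | x ∈ N ∧ τ x = 0 })
                  { x : R | x ∈ P ∧ τ x = 0 } ⊆ { x : R | τ x = 0 }) :
    altSet { x : R | x ∈ N ∧ τ x = 0 }
           ((fun t => y * t * star y) '' { x : R | x ∈ P ∧ τ x = 0 })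
      ⊆ { x : R | τ x = 0 } := by
  have hystar : star y * y * star y = star y := by
    have h := congrArg star hy
    simpa [star_mul, mul_assoc] using h
  intro m hm
  obtain ⟨n, hn, c, lab, hmem, halt, hmeq⟩ := hm
  have key : ∀ j : Fin n, ∃ a : R,
      (if lab j then a ∈ ((fun s => star y * s * y) '' { x : R | x ∈ N ∧ τ x = 0 })
       else a ∈ { x : R | x ∈ P ∧ τ x = 0 }) ∧
      y * a * star y = c j ∧ star y * y * a = a := by
    intro j
    have hj := hmem j
    by_cases h : lab j = true
    · rw [if_pos h] at hj
      obtain ⟨hjN, hjτ⟩ := hj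
      refine ⟨star y * c j * y, ?_, ?_, ?_⟩
      · rw [if_pos h]; exact ⟨c j, ⟨hjN, hjτ⟩, rfl⟩
      · calc y * (star y * c j * y) * star y
            = (y * star y) * c j * (y * star y) := by simp [mul_assoc]
          _ = c j := (hNcorner (c j) hjN).symm
      · calc star y * y * (star y * c j * y)
            = (star y * y * star y) * c j * y := by simp [mul_assoc]
          _ = star y * c j * y := by rw [hystar]
    · rw [if_neg h] at hj
      obtain ⟨t, ⟨htP, htτ⟩, hteq⟩ := hj
      refine ⟨t, ?_, hteq, ?_⟩
      · rw [if_neg h]; exact ⟨htP, htτ⟩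
      have hc := hPcorner t htP
      calc star y * y * t = star y * y * ((star y * y) * t * (star y * y)) := by rw [← hc]
        _ = (star y * (y * star y * y)) * t * (star y * y) := by simp [mul_assoc]
        _ = (star y * y) * t * (star y * y) := by rw [hy]
        _ = t := hc.symm
  choose a ha1 ha2 ha3 using key
  have habs : ∀ x ∈ List.ofFn a, star y * y * x = x := by
    intro x hx
    rw [List.mem_ofFn] at hx
    obtain ⟨j, rfl⟩ := hx
    exact ha3 j
  have hne : List.ofFn a ≠ [] := by
    intro h
    have := congrArg List.length h
    simp at this
    omega
  have hA0 : τ (List.ofFn a).prod = 0 :=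
    hyp ⟨n, hn, a, lab, ha1, halt, rfl⟩
  have hmA : m = y * (List.ofFn a).prod * star y := by
    have hca : (fun x => y * x * star y) ∘ a = c := funext fun j => ha2 j
    rw [hmeq, ← conj_prod y (star y) _ habs hne, List.map_ofFn, hca]
  rw [Set.mem_setOf_eq, hmA]
  calc τ (y * (List.ofFn a).prod * star y)
      = τ (star y * (y * (List.ofFn a).prod)) := htr _ _
    _ = τ (star y * y * (List.ofFn a).prod) := by rw [mul_assoc]
    _ = τ (List.ofFn a).prod := by rw [absorb_prod y (star y) _ habs hne]
    _ = 0 := hA0
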